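/- Let 1 → G₁ →^α G₂ →^β G₃ → 1 be an exact sequence of groups. Assume that G₁ is finitely generated and that the profinite completion Ĝ₁ of G₁ has trivial center. Then the induced sequence of profinite completions 1 → Ĝ₁ →^α̂ Ĝ₂ →^β̂ Ĝ₃ → 1 is also exact. -/

import Mathlib

set_option linter.unusedVariables false

namespace CSP

/-! ### The profinite completion of a discrete group -/

/-- The index set for the profinite completion: finite-index normal subgroups. -/
abbrev FinQuot (G : Type*) [Group G] : Type _ :=
  {N : Subgroup G // N.Normal ∧ N.FiniteIndex}

variable (G : Type*) [Group G]

instance (N : FinQuot G) : (N.1).Normal := N.2.1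

instance (N : FinQuot G) : TopologicalSpace (G ⧸ N.1) := ⊥

instance (N : FinQuot G) : DiscreteTopology (G ⧸ N.1) := ⟨rfl⟩

instance (N : FinQuot G) : IsTopologicalGroup (G ⧸ N.1) where
  continuous_mul := continuous_of_discreteTopology
  continuous_inv := continuous_of_discreteTopology

/-- The diagonal homomorphism from `G` into the product of all of its finite quotients. -/
def toFinQuots : G →* (∀ N : FinQuot G, G ⧸ N.1) :=
  Pi.monoidHom fun N => QuotientGroup.mk' N.1

/-- The profinite completion of `G` as a subgroup of the product of the finite
quotients of `G`: the closure of the image of the diagonal map. -/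
def profSubgroup : Subgroup (∀ N : FinQuot G, G ⧸ N.1) :=
  (toFinQuots G).range.topologicalClosure

/-- The profinite completion of a (discrete) group `G`, as a topological group.
For `G = F(X)` a free group on a finite set `X`, this is the free profinite group
`𝔉(X)` on `X`. -/
abbrev ProfComp : Type _ := ↥(profSubgroup G)

/-- The canonical homomorphism from `G` to its profinite completion.  For a free
group this is the embedding of `F(X)` into the free profinite group `𝔉(X)`. -/
def unit : G →* ProfComp G :=
  (toFinQuots G).codRestrict _ fun g =>
    Subgroup.le_topologicalClosure _ (MonoidHom.mem_range.2 ⟨g, rfl⟩)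

/-! ### Auxiliary lemmas -/

instance (N : FinQuot G) : N.1.FiniteIndex := N.2.2

instance : CompactSpace (ProfComp G) :=
  isCompact_iff_compactSpace.mp ((Subgroup.isClosed_topologicalClosure _).isCompact)

theorem unit_coord (g : G) (N : FinQuot G) : (unit G g).1 N = QuotientGroup.mk g := rfl

theorem mul_coord (x y : ProfComp G) (N : FinQuot G) : (x * y).1 N = x.1 N * y.1 N := rfl

theorem one_coord (N : FinQuot G) : (1 : ProfComp G).1 N = 1 := rfl

theorem denseRange_unit : DenseRange (unit G) := by
  intro x
  rw [closure_subtype]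
  have h2 : (Subtype.val '' Set.range (unit G)) = Set.range (toFinQuots G) := by
    rw [← Set.range_comp]; rfl
  rw [h2]
  have := x.2
  have h3 : (profSubgroup G : Set _) = closure (Set.range (toFinQuots G)) := by
    rw [profSubgroup, Subgroup.topologicalClosure_coe, MonoidHom.coe_range]
  rw [← h3]; exact this

theorem continuous_coord (N : FinQuot G) : Continuous (fun x : ProfComp G => x.1 N) :=
  (continuous_apply N).comp continuous_subtype_val

variable {G}

/-- Coordinates of an element of the profinite completion are compatible. -/
theorem coord_compat {M N : FinQuot G} (h : M.1 ≤ N.1) (x : ProfComp G) :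
    QuotientGroup.map M.1 N.1 (MonoidHom.id G) h (x.1 M) = x.1 N := by
  have := Continuous.ext_on (denseRange_unit G)
    ((continuous_of_discreteTopology).comp (continuous_coord G M))
    (continuous_coord G N)
    (s := Set.range (unit G))
    (f := fun x : ProfComp G => QuotientGroup.map M.1 N.1 (MonoidHom.id G) h (x.1 M))
    (g := fun x : ProfComp G => x.1 N) ?_
  · exact congrFun this x
  · rintro _ ⟨g, rfl⟩
    simp only [unit_coord]
    rfl

/-- Compatibility of an induced map on completions with quotient maps. -/
theorem hat_coord {G H : Type*} [Group G] [Group H] (f : G →* H)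
    (fhat : ProfComp G →* ProfComp H) (hcont : Continuous fhat)
    (hcompat : ∀ g, fhat (unit G g) = unit H (f g))
    (N : FinQuot H) (D : FinQuot G) (h : D.1 ≤ N.1.comap f) (x : ProfComp G) :
    (fhat x).1 N = QuotientGroup.map D.1 N.1 f h (x.1 D) := by
  have := Continuous.ext_on (denseRange_unit G)
    ((continuous_coord H N).comp hcont)
    ((continuous_of_discreteTopology).comp (continuous_coord G D))
    (s := Set.range (unit G))
    (f := fun x : ProfComp G => (fhat x).1 N)
    (g := fun x : ProfComp G => QuotientGroup.map D.1 N.1 f h (x.1 D)) ?_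
  · exact congrFun this x
  · rintro _ ⟨g, rfl⟩
    simp only [hcompat, unit_coord, QuotientGroup.map_mk]

theorem comap_normal {G H : Type*} [Group G] [Group H] (f : G →* H) (N : FinQuot H) :
    (N.1.comap f).Normal := N.2.1.comap f

theorem comap_map_injective {G H : Type*} [Group G] [Group H] (f : G →* H) (N : FinQuot H) :
    Function.Injective (QuotientGroup.map (N.1.comap f) N.1 f le_rfl) := by
  intro a b
  induction a using QuotientGroup.induction_on with | _ a =>
  induction b using QuotientGroup.induction_on with | _ b =>
  intro hab
  simp only [QuotientGroup.map_mk] at hab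
  rw [QuotientGroup.eq] at hab ⊢
  simpa using hab

theorem comap_finiteIndex {G H : Type*} [Group G] [Group H] (f : G →* H) (N : FinQuot H) :
    (N.1.comap f).FiniteIndex := by
  haveI : (N.1.comap f).Normal := comap_normal f N
  haveI : Finite (G ⧸ N.1.comap f) :=
    Finite.of_injective _ (comap_map_injective f N)
  exact Subgroup.finiteIndex_of_finite_quotient

theorem finite_monoidHom {G M : Type*} [Group G] [Group M] [Finite M] (hfg : Group.FG G) :
    Finite (G →* M) := by
  obtain ⟨S, hS⟩ := hfg.1
  have : Function.Injective (fun (φ : G →* M) => (fun s : S => φ s.1)) := by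
    intro φ ψ h
    ext x
    have hx : x ∈ Subgroup.closure (S : Set G) := hS ▸ Subgroup.mem_top x
    induction hx using Subgroup.closure_induction with
    | mem y hy => exact congrFun h ⟨y, hy⟩
    | one => simp
    | mul a b _ _ iha ihb => simp [iha, ihb]
    | inv a _ iha => rw [map_inv, map_inv, iha]
  exact Finite.of_injective _ this

/-- Every finite-index normal subgroup of a f.g. group contains a
finite-index normal subgroup invariant under all automorphisms. -/
theorem exists_char {G : Type*} [Group G] (hfg : Group.FG G) (N : Subgroup G)
    [N.Normal] [N.FiniteIndex] :
    ∃ C : Subgroup G, C.Normal ∧ C.FiniteIndex ∧ C ≤ N ∧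
      ∀ (e : G ≃* G) (x : G), x ∈ C → e x ∈ C := by
  haveI : Finite (G →* Equiv.Perm (G ⧸ N)) := finite_monoidHom hfg
  refine ⟨⨅ (φ : G →* Equiv.Perm (G ⧸ N)), φ.ker, ?_, ?_, ?_, ?_⟩
  · constructor
    intro x hx g
    rw [Subgroup.mem_iInf] at hx ⊢
    intro φ
    exact (MonoidHom.normal_ker φ).conj_mem x (hx φ) g
  · exact Subgroup.finiteIndex_iInf fun φ => inferInstance
  · refine le_trans (iInf_le _ (MulAction.toPermHom G (G ⧸ N))) ?_
    intro g hg
    rw [MonoidHom.mem_ker] at hg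
    have h1 : g • ((1 : G) : G ⧸ N) = ((1 : G) : G ⧸ N) := by
      show (MulAction.toPermHom G (G ⧸ N)) g ((1 : G) : G ⧸ N) = _
      rw [hg]; rfl
    rw [MulAction.Quotient.smul_mk, smul_eq_mul, mul_one] at h1
    rw [QuotientGroup.mk_one] at h1
    exact (QuotientGroup.eq_one_iff g).mp h1
  · intro e x hx
    rw [Subgroup.mem_iInf] at hx ⊢
    intro φ
    have := hx (φ.comp e.toMonoidHom)
    rw [MonoidHom.mem_ker, MonoidHom.comp_apply] at this
    simpa using this

/-- The kernel of the conjugation action of `G₂` on a finite quotient of `G₁` by a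
characteristic subgroup. -/
theorem exists_conj_ker {G₁ G₂ : Type*} [Group G₁] [Group G₂] (α : G₁ →* G₂)
    (hαinj : Function.Injective α) (hnorm : α.range.Normal)
    (C : Subgroup G₁) [C.Normal] [C.FiniteIndex]
    (hchar : ∀ (e : G₁ ≃* G₁) (x : G₁), x ∈ C → e x ∈ C) :
    ∃ N₂ : Subgroup G₂, N₂.Normal ∧ N₂.FiniteIndex ∧
      ∀ g₁ : G₁, (α g₁ ∈ N₂ ↔
        ∀ x : G₁, ((g₁ * x * g₁⁻¹ : G₁) : G₁ ⧸ C) = (x : G₁ ⧸ C)) := by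
  haveI := hnorm
  let e₀ : G₁ ≃* α.range := MonoidHom.ofInjective hαinj
  let t : G₂ →* MulAut G₁ := (MulAut.congr e₀.symm).toMonoidHom.comp MulAut.conjNormal
  have key : ∀ (g₂ : G₂) (x : G₁), α (t g₂ x) = g₂ * α x * g₂⁻¹ := by
    intro g₂ x
    have h1 : t g₂ x = e₀.symm (MulAut.conjNormal g₂ (e₀ x)) := rfl
    have h2 : ∀ y : α.range, α (e₀.symm y) = (y : G₂) := by
      intro y
      have := MonoidHom.ofInjective_apply hαinj (x := e₀.symm y)
      rw [show MonoidHom.ofInjective hαinj (e₀.symm y) = y from e₀.apply_symm_apply y] at this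
      exact this.symm
    rw [h1, h2]
    rw [MulAut.conjNormal_apply]
    rfl
  have tC : ∀ (g₂ : G₂), ∀ x ∈ C, t g₂ x ∈ C := fun g₂ x hx => hchar (t g₂) x hx
  let act : G₂ → (G₁ ⧸ C →* G₁ ⧸ C) := fun g₂ =>
    QuotientGroup.lift C ((QuotientGroup.mk' C).comp (t g₂).toMonoidHom)
      (fun x hx => by
        show ((t g₂ x : G₁) : G₁ ⧸ C) = 1
        exact (QuotientGroup.eq_one_iff _).mpr (tC g₂ x hx))
  have act_mk : ∀ (g₂ : G₂) (x : G₁), act g₂ (x : G₁ ⧸ C) = ((t g₂ x : G₁) : G₁ ⧸ C) :=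
    fun g₂ x => rfl
  let ρ₀ : G₂ →* Function.End (G₁ ⧸ C) :=
    { toFun := fun g₂ => ⇑(act g₂)
      map_one' := by
        funext q
        induction q using QuotientGroup.induction_on with | _ x =>
        show act 1 (x : G₁ ⧸ C) = (x : G₁ ⧸ C)
        rw [act_mk, map_one]
        rfl
      map_mul' := by
        intro a b
        funext q
        induction q using QuotientGroup.induction_on with | _ x =>
        show act (a * b) (x : G₁ ⧸ C) = act a (act b (x : G₁ ⧸ C))
        rw [act_mk, act_mk, act_mk, map_mul]
        rfl }
  let ρ : G₂ →* (Function.End (G₁ ⧸ C))ˣ := ρ₀.toHomUnits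
  haveI : Finite (G₁ ⧸ C) := Subgroup.finite_quotient_of_finiteIndex
  haveI : Finite (Function.End (G₁ ⧸ C)) := by unfold Function.End; infer_instance
  haveI : Finite ((Function.End (G₁ ⧸ C))ˣ) := Finite.of_injective _ (fun _ _ h => Units.ext h)
  refine ⟨ρ.ker, MonoidHom.normal_ker ρ, inferInstance, ?_⟩
  intro g₁
  have hteq : ∀ x : G₁, t (α g₁) x = g₁ * x * g₁⁻¹ := by
    intro x
    apply hαinj
    rw [key, map_mul, map_mul, map_inv]
  constructor
  · intro h x
    rw [MonoidHom.mem_ker] at h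
    have h' : ρ₀ (α g₁) = 1 := by
      have := congrArg Units.val h
      rwa [MonoidHom.coe_toHomUnits] at this
    have := congrFun h' ((x : G₁ ⧸ C))
    show _ = (1 : Function.End (G₁ ⧸ C)) (x : G₁ ⧸ C)
    rw [← this]
    show ((g₁ * x * g₁⁻¹ : G₁) : G₁ ⧸ C) = act (α g₁) (x : G₁ ⧸ C)
    rw [act_mk, hteq]
  · intro h
    rw [MonoidHom.mem_ker]
    apply Units.ext
    rw [MonoidHom.coe_toHomUnits]
    show ρ₀ (α g₁) = 1
    funext q
    induction q using QuotientGroup.induction_on with | _ x =>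
    show act (α g₁) (x : G₁ ⧸ C) = (x : G₁ ⧸ C)
    rw [act_mk, hteq]
    exact h x

/-- Lemma 2.1: let `1 → G₁ → G₂ → G₃ → 1` be an exact sequence of groups, with `G₁`
finitely generated and such that the profinite completion `Ĝ₁` has trivial center.
Then the induced sequence `1 → Ĝ₁ → Ĝ₂ → Ĝ₃ → 1` of profinite completions (i.e. the
sequence of the unique continuous homomorphisms between the completions compatible
with the given maps) is also exact. -/
theorem profinite_completion_exact
    (G₁ : Type*) (G₂ : Type*) (G₃ : Type*) [Group G₁] [Group G₂] [Group G₃]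
    (α : G₁ →* G₂) (β : G₂ →* G₃)
    (hαinj : Function.Injective α) (hβsurj : Function.Surjective β)
    (hexact : α.range = β.ker)
    (hfg : Group.FG G₁)
    (hcenter : Subgroup.center (ProfComp G₁) = ⊥)
    (αhat : ProfComp G₁ →* ProfComp G₂) (βhat : ProfComp G₂ →* ProfComp G₃)
    (hαcont : Continuous αhat) (hβcont : Continuous βhat)
    (hαcompat : ∀ g : G₁, αhat (unit G₁ g) = unit G₂ (α g))
    (hβcompat : ∀ g : G₂, βhat (unit G₂ g) = unit G₃ (β g)) :
    Function.Injective αhat ∧ αhat.range = βhat.ker ∧ Function.Surjective βhat := by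
  haveI hrangeN : α.range.Normal := hexact ▸ (MonoidHom.normal_ker β)
  -- Surjectivity of βhat
  have hsurj : Function.Surjective βhat := by
    have hclosed : IsClosed (Set.range βhat) := (isCompact_range hβcont).isClosed
    have hsub : Set.range (unit G₃) ⊆ Set.range βhat := by
      rintro _ ⟨g₃, rfl⟩
      obtain ⟨g₂, rfl⟩ := hβsurj g₃
      exact ⟨unit G₂ g₂, hβcompat g₂⟩
    rw [← Set.range_eq_univ]
    apply Set.eq_univ_of_univ_subset
    rw [← (denseRange_unit G₃).closure_eq]
    exact hclosed.closure_subset_iff.mpr hsub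
  -- Injectivity of αhat
  have hinj : Function.Injective αhat := by
    rw [injective_iff_map_eq_one]
    intro k hk
    have hcomm : ∀ g : G₁, unit G₁ g * k = k * unit G₁ g := by
      intro g
      apply Subtype.ext; funext N₁
      rw [mul_coord, mul_coord]
      obtain ⟨C, hCn, hCf, hCle, hCchar⟩ := exists_char hfg N₁.1
      haveI := hCn; haveI := hCf
      obtain ⟨N₂, hN₂n, hN₂f, hN₂mem⟩ := exists_conj_ker α hαinj hrangeN C hCchar
      let N₂' : FinQuot G₂ := ⟨N₂, hN₂n, hN₂f⟩
      let D : FinQuot G₁ := ⟨N₂.comap α, comap_normal α N₂', comap_finiteIndex α N₂'⟩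
      let CQ : FinQuot G₁ := ⟨C, hCn, hCf⟩
      have hkD : k.1 D = 1 := by
        have h := hat_coord α αhat hαcont hαcompat N₂' D le_rfl k
        rw [hk, one_coord] at h
        apply comap_map_injective α N₂'
        rw [map_one]
        exact h.symm
      obtain ⟨x, hx⟩ := QuotientGroup.mk'_surjective C (k.1 CQ)
      have hCD : C ≤ D.1 := by
        intro c hc
        show α c ∈ N₂
        rw [hN₂mem c]
        intro z
        have h1 : ((c : G₁) : G₁ ⧸ C) = 1 := (QuotientGroup.eq_one_iff c).mpr hc
        calc ((c * z * c⁻¹ : G₁) : G₁ ⧸ C)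
            = ((c : G₁) : G₁ ⧸ C) * ((z : G₁) : G₁ ⧸ C) * (((c : G₁) : G₁ ⧸ C))⁻¹ := by
              rw [QuotientGroup.mk_mul, QuotientGroup.mk_mul, QuotientGroup.mk_inv]
          _ = (z : G₁ ⧸ C) := by rw [h1]; group
      have hxD : ((x : G₁ ⧸ D.1)) = k.1 D := by
        rw [← coord_compat (M := CQ) (N := D) hCD k, ← hx]
        show _ = QuotientGroup.map CQ.1 D.1 (MonoidHom.id G₁) hCD (QuotientGroup.mk x)
        rfl
      have hxmem : α x ∈ N₂ := by
        have h2 : ((x : G₁ ⧸ D.1)) = 1 := by rw [hxD, hkD]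
        exact (QuotientGroup.eq_one_iff x).mp h2
      have hcen : ∀ z : G₁, ((x * z * x⁻¹ : G₁) : G₁ ⧸ C) = (z : G₁ ⧸ C) := (hN₂mem x).mp hxmem
      have hxN₁ : ((x : G₁ ⧸ N₁.1)) = k.1 N₁ := by
        rw [← coord_compat (M := CQ) (N := N₁) hCle k, ← hx]
        show _ = QuotientGroup.map CQ.1 N₁.1 (MonoidHom.id G₁) hCle (QuotientGroup.mk x)
        rfl
      rw [unit_coord, ← hxN₁]
      have hw : x * g⁻¹ * x⁻¹ * g ∈ C := by
        have h2 := hcen g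
        rw [QuotientGroup.eq] at h2
        have heq : (x * g * x⁻¹)⁻¹ * g = x * g⁻¹ * x⁻¹ * g := by group
        rwa [heq] at h2
      have hv : (g * x)⁻¹ * (x * g) ∈ N₁.1 := by
        apply hCle
        have h5 : x⁻¹ * (x * g⁻¹ * x⁻¹ * g) * x⁻¹⁻¹ ∈ C := hCn.conj_mem _ hw x⁻¹
        have h6 := (Subgroup.inv_mem_iff C).mpr h5
        have h3 : (x⁻¹ * (x * g⁻¹ * x⁻¹ * g) * x⁻¹⁻¹)⁻¹ = (g * x)⁻¹ * (x * g) := by group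
        rwa [h3] at h6
      calc (QuotientGroup.mk g : G₁ ⧸ N₁.1) * QuotientGroup.mk x
          = QuotientGroup.mk (g * x) := by rw [QuotientGroup.mk_mul]
        _ = QuotientGroup.mk (x * g) := QuotientGroup.eq.mpr hv
        _ = QuotientGroup.mk x * QuotientGroup.mk g := by rw [QuotientGroup.mk_mul]
    have hkcen : k ∈ Subgroup.center (ProfComp G₁) := by
      rw [Subgroup.mem_center_iff]
      intro y
      have := Continuous.ext_on (denseRange_unit G₁)
        (continuous_id.mul continuous_const) (continuous_const.mul continuous_id)
        (s := Set.range (unit G₁))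
        (f := fun y : ProfComp G₁ => y * k)
        (g := fun y : ProfComp G₁ => k * y) ?_
      · exact congrFun this y
      · rintro _ ⟨g, rfl⟩
        exact hcomm g
    rw [hcenter, Subgroup.mem_bot] at hkcen
    exact hkcen
  -- Exactness in the middle
  refine ⟨hinj, le_antisymm ?_ ?_, hsurj⟩
  · rintro _ ⟨x, rfl⟩
    rw [MonoidHom.mem_ker]
    have h := Continuous.ext_on (denseRange_unit G₁) (hβcont.comp hαcont) continuous_const
      (s := Set.range (unit G₁))
      (f := fun x : ProfComp G₁ => βhat (αhat x))
      (g := fun _ : ProfComp G₁ => (1 : ProfComp G₃)) ?_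
    · exact congrFun h x
    · rintro _ ⟨g, rfl⟩
      show βhat (αhat (unit G₁ g)) = 1
      rw [hαcompat, hβcompat]
      have h1 : α g ∈ β.ker := hexact ▸ ⟨g, rfl⟩
      rw [MonoidHom.mem_ker] at h1
      show unit G₃ (β (α g)) = 1
      rw [h1, map_one]
  · intro y hy
    by_contra hyR
    have hRcl : IsClosed (Subtype.val '' (Set.range αhat)) :=
      ((isCompact_range hαcont).image continuous_subtype_val).isClosed
    have hyR' : y.1 ∈ (Subtype.val '' (Set.range αhat))ᶜ := by
      intro hmem
      obtain ⟨z, hz, hzy⟩ := hmem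
      exact hyR (Subtype.ext hzy ▸ hz)
    obtain ⟨I, u, hu, hsub⟩ := isOpen_pi_iff.mp hRcl.isOpen_compl y.1 hyR'
    have hN₀n : (⨅ N ∈ I, N.1 : Subgroup G₂).Normal := by
      constructor
      intro n hn g
      simp only [Subgroup.mem_iInf] at hn ⊢
      intro N hN
      exact N.2.1.conj_mem n (hn N hN) g
    have hN₀f : (⨅ N ∈ I, N.1 : Subgroup G₂).FiniteIndex :=
      Subgroup.finiteIndex_iInf' _ (fun N _ => N.2.2)
    let Nstar : FinQuot G₂ := ⟨⨅ N ∈ I, N.1, hN₀n, hN₀f⟩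
    have hle : ∀ N ∈ I, Nstar.1 ≤ N.1 := fun N hN => biInf_le _ hN
    have hclaim : ∀ z : ProfComp G₂, z ∈ Set.range αhat → z.1 Nstar ≠ y.1 Nstar := by
      intro z hz heq
      refine hsub ?_ (Set.mem_image_of_mem _ hz)
      intro N hN
      have h1 : z.1 N = y.1 N := by
        rw [← coord_compat (hle N hN) z, ← coord_compat (hle N hN) y, heq]
      rw [h1]
      exact (hu N hN).2
    obtain ⟨g₂, hg₂⟩ := QuotientGroup.mk'_surjective Nstar.1 (y.1 Nstar)
    haveI : (Nstar.1 ⊔ β.ker).FiniteIndex := Subgroup.finiteIndex_of_le le_sup_left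
    have hN₃f : (Nstar.1.map β).FiniteIndex := by
      constructor
      rw [Subgroup.index_map]
      have h4 : β.range = ⊤ := MonoidHom.range_eq_top_of_surjective β hβsurj
      rw [h4, Subgroup.index_top, mul_one]
      exact Subgroup.FiniteIndex.index_ne_zero
    haveI hN₃n : (Nstar.1.map β).Normal := hN₀n.map β hβsurj
    let N₃ : FinQuot G₃ := ⟨Nstar.1.map β, hN₃n, hN₃f⟩
    have hcomp : Nstar.1 ≤ N₃.1.comap β := fun n hn =>
      Subgroup.mem_comap.mpr (Subgroup.mem_map_of_mem β hn)
    have h := hat_coord β βhat hβcont hβcompat N₃ Nstar hcomp y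
    rw [MonoidHom.mem_ker.mp hy, one_coord] at h
    rw [← hg₂, QuotientGroup.mk'_apply, QuotientGroup.map_mk] at h
    have hβg₂ : β g₂ ∈ Nstar.1.map β := by
      rw [← QuotientGroup.eq_one_iff]
      exact h.symm
    obtain ⟨n, hn, hβn⟩ := hβg₂
    have hker : g₂ * n⁻¹ ∈ β.ker := by
      rw [MonoidHom.mem_ker, map_mul, map_inv, hβn]
      group
    rw [← hexact] at hker
    obtain ⟨g₁, hg₁⟩ := hker
    apply hclaim (αhat (unit G₁ g₁)) ⟨_, rfl⟩
    rw [hαcompat, unit_coord, hg₁, ← hg₂, QuotientGroup.mk'_apply]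
    rw [QuotientGroup.mk_mul, QuotientGroup.mk_inv]
    have hn1 : (QuotientGroup.mk n : G₂ ⧸ Nstar.1) = 1 := (QuotientGroup.eq_one_iff n).mpr hn
    rw [hn1]
    group

end CSP
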